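/- Let μ be a signed measure on ℝ^d with compact support. Then μ is pseudo-positive if and only if the functional P ↦ ∫_{ℝ^d} P dμ on ℂ[x_1,…,x_d] is pseudo-positive definite. -/

import Mathlib

open MeasureTheory MvPolynomial Metric
open scoped ComplexOrder ENNReal

noncomputable section

/-- `d`-dimensional Euclidean space. -/
abbrev E (d : ℕ) := EuclideanSpace ℝ (Fin d)

/-- The (surface) measure `dθ` on the unit sphere `S^{d-1}`. -/
noncomputable def sphMeas (d : ℕ) : Measure (sphere (0 : E d) 1) :=
  (volume : Measure (E d)).toSphere

/-- A bundled orthonormal basis `Y_{k,l}`, `l = 1,…,a_k`, of the spaces `H_k(ℝ^d)` of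
real-valued harmonic polynomials homogeneous of degree `k`, orthonormal with respect to
`⟨f,g⟩ = ∫_{S^{d-1}} f g dθ`. -/
structure HarmonicBasis (d : ℕ) where
  a : ℕ → ℕ
  Y : (k : ℕ) → Fin (a k) → MvPolynomial (Fin d) ℝ
  harmonic : ∀ k l, (∑ i, pderiv i (pderiv i (Y k l))) = 0
  homogeneous : ∀ k l, (Y k l).IsHomogeneous k
  orthonormal : ∀ (k k' : ℕ) (l : Fin (a k)) (l' : Fin (a k')),
    (∫ θ : sphere (0 : E d) 1,
        (eval (fun i => (θ : E d) i) (Y k l)) * (eval (fun i => (θ : E d) i) (Y k' l'))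
      ∂(sphMeas d)) = if k = k' ∧ (l : ℕ) = (l' : ℕ) then 1 else 0
  complete : ∀ (k : ℕ) (P : MvPolynomial (Fin d) ℝ),
    (∑ i, pderiv i (pderiv i P)) = 0 → P.IsHomogeneous k →
      P ∈ Submodule.span ℝ (Set.range (Y k))

/-- Evaluation of a complex polynomial in `d` variables at a point of `ℝ^d`. -/
def evalC {d : ℕ} (P : MvPolynomial (Fin d) ℂ) (x : E d) : ℂ :=
  eval (fun i => (x i : ℂ)) P

/-- The polynomial `|x|² = x₁² + … + x_d²`. -/
def normSqP (d : ℕ) : MvPolynomial (Fin d) ℂ := ∑ i, X i ^ 2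

/-- Integral of a (complex- or real-valued) function with respect to a signed measure,
via the Jordan decomposition. -/
noncomputable def sInt {α : Type*} {G : Type*} [MeasurableSpace α] [NormedAddCommGroup G]
    [NormedSpace ℝ G] (μ : SignedMeasure α) (f : α → G) : G :=
  (∫ x, f x ∂μ.toJordanDecomposition.posPart) - ∫ x, f x ∂μ.toJordanDecomposition.negPart

/-- A signed measure is a moment measure if every polynomial is integrable with respect to
its total variation. -/
def IsMomentMeasure {d : ℕ} (μ : SignedMeasure (E d)) : Prop :=
  ∀ P : MvPolynomial (Fin d) ℂ, Integrable (evalC P) μ.totalVariation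

namespace HarmonicBasis

variable {d : ℕ} (B : HarmonicBasis d)

/-- `Y_{k,l}` as a function on `ℝ^d`. -/
def Yf (k : ℕ) (l : Fin (B.a k)) (x : E d) : ℝ := eval (fun i => x i) (B.Y k l)

/-- `Y_{k,l}` as a complex polynomial. -/
def YC (k : ℕ) (l : Fin (B.a k)) : MvPolynomial (Fin d) ℂ :=
  (B.Y k l).map (algebraMap ℝ ℂ)

/-- The Laplace–Fourier coefficient `f_{k,l}(r) = ∫_{S^{d-1}} f(rθ) Y_{k,l}(θ) dθ`. -/
noncomputable def lfCoeff (f : E d → ℂ) (k : ℕ) (l : Fin (B.a k)) (r : ℝ) : ℂ :=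
  ∫ θ : sphere (0 : E d) 1, f (r • (θ : E d)) * (B.Yf k l (θ : E d) : ℂ) ∂(sphMeas d)

/-- `GaussDecomp B f K p` : `p` is a Gauss (Laplace–Fourier) decomposition of the polynomial
`f`, i.e. `f(x) = ∑_{k=0}^{K} ∑_{l=1}^{a_k} p_{k,l}(|x|²) Y_{k,l}(x)` with `p_{k,l} = 0` for
`k > K`. -/
def GaussDecomp (f : MvPolynomial (Fin d) ℂ) (K : ℕ)
    (p : (k : ℕ) → Fin (B.a k) → Polynomial ℂ) : Prop :=
  (∀ k, K < k → ∀ l, p k l = 0) ∧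
    f = ∑ k ∈ Finset.range (K + 1), ∑ l,
      Polynomial.aeval (normSqP d) (p k l) * B.YC k l

/-- The component functional `T_{k,l}(p) = T(p(|x|²) Y_{k,l}(x))`. -/
def component (T : MvPolynomial (Fin d) ℂ → ℂ) (k : ℕ) (l : Fin (B.a k))
    (p : Polynomial ℂ) : ℂ :=
  T (Polynomial.aeval (normSqP d) p * B.YC k l)

/-- A functional `T` on `ℂ[x₁,…,x_d]` is pseudo-positive definite (w.r.t. the basis `Y_{k,l}`)
if `T_{k,l}(p* p) ≥ 0` and `T_{k,l}(t · p*(t) p(t)) ≥ 0` for all univariate `p` and all `k, l`. -/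
def PPD (T : MvPolynomial (Fin d) ℂ → ℂ) : Prop :=
  ∀ (k : ℕ) (l : Fin (B.a k)) (p : Polynomial ℂ),
    0 ≤ B.component T k l (p.map (starRingEnd ℂ) * p) ∧
    0 ≤ B.component T k l (Polynomial.X * (p.map (starRingEnd ℂ) * p))

/-- A signed measure `μ` on `ℝ^d` is pseudo-positive (w.r.t. the basis `Y_{k,l}`) if
`∫ h(|x|) Y_{k,l}(x) dμ ≥ 0` for every non-negative continuous compactly supported `h`. -/
def PseudoPositive (μ : SignedMeasure (E d)) : Prop :=
  ∀ (k : ℕ) (l : Fin (B.a k)) (h : ℝ → ℝ), Continuous h → HasCompactSupport h →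
    (∀ t, 0 ≤ h t) → 0 ≤ sInt μ (fun x => h ‖x‖ * B.Yf k l x)

/-- `ν` is the family of component measures `μ_{k,l}` of the signed measure `μ`, i.e.
`∫_0^∞ h dμ_{k,l} = ∫_{ℝ^d} h(|x|) Y_{k,l}(x) dμ` for all continuous compactly supported `h`. -/
def IsComponentFamily (μ : SignedMeasure (E d))
    (ν : (k : ℕ) → Fin (B.a k) → Measure ℝ) : Prop :=
  ∀ k l, (ν k l) (Set.Iio 0) = 0 ∧
    ∀ h : ℝ → ℝ, Continuous h → HasCompactSupport h →
      ∫ t, h t ∂(ν k l) = sInt μ (fun x => h ‖x‖ * B.Yf k l x)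

/-- The summability condition `C_N = ∑_{k,l} ∫_0^∞ r^N r^{-k} dσ_{k,l}(r) < ∞` for all `N`. -/
def SummCond (σ : (k : ℕ) → Fin (B.a k) → Measure ℝ) : Prop :=
  ∀ N : ℕ, (∑' k : ℕ, ∑ l, ∫⁻ r, (ENNReal.ofReal r) ^ N * ((ENNReal.ofReal r) ^ k)⁻¹
    ∂(σ k l)) < ⊤

end HarmonicBasis

/-- The set `W_τ^{Sti}` of all non-negative moment measures on `[0,∞)` having the same
moments as `τ`. -/
def WSti (τ : Measure ℝ) : Set (Measure ℝ) :=
  {ρ | ρ (Set.Iio 0) = 0 ∧ (∀ m : ℕ, Integrable (fun t => t ^ m) ρ) ∧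
    ∀ m : ℕ, ∫ t, t ^ m ∂ρ = ∫ t, t ^ m ∂τ}

/-- A measure `ν` on `[0,∞)` is determined in the sense of Stieltjes if it is the only
non-negative measure on `[0,∞)` with its moments. -/
def StieltjesDeterminate (ν : Measure ℝ) : Prop :=
  ∀ τ : Measure ℝ, τ ∈ WSti ν → τ = ν

section Helpers

open MeasureTheory

variable {d : ℕ}

lemma posPart_le_tv (μ : SignedMeasure (E d)) :
    μ.toJordanDecomposition.posPart ≤ μ.totalVariation :=
  Measure.le_add_right le_rfl

lemma negPart_le_tv (μ : SignedMeasure (E d)) :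
    μ.toJordanDecomposition.negPart ≤ μ.totalVariation :=
  Measure.le_add_left le_rfl

lemma sInt_congr {G : Type*} [NormedAddCommGroup G] [NormedSpace ℝ G]
    {μ : SignedMeasure (E d)} {f g : E d → G}
    (h : f =ᵐ[μ.totalVariation] g) : sInt μ f = sInt μ g := by
  unfold sInt
  rw [integral_congr_ae (h.filter_mono (MeasureTheory.ae_mono (posPart_le_tv μ))),
    integral_congr_ae (h.filter_mono (MeasureTheory.ae_mono (negPart_le_tv μ)))]

lemma sInt_ofReal {μ : SignedMeasure (E d)} (f : E d → ℝ) :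
    sInt μ (fun x => (f x : ℂ)) = ((sInt μ f : ℝ) : ℂ) := by
  unfold sInt
  have h1 : ∀ ν : Measure (E d), ∫ x, ((f x : ℝ) : ℂ) ∂ν = ((∫ x, f x ∂ν : ℝ) : ℂ) :=
    fun ν => integral_ofReal
  simp only [h1, Complex.ofReal_sub]

lemma sInt_sub {μ : SignedMeasure (E d)} {f g : E d → ℝ}
    (hf : Integrable f μ.totalVariation) (hg : Integrable g μ.totalVariation) :
    sInt μ (fun x => f x - g x) = sInt μ f - sInt μ g := by
  unfold sInt
  rw [integral_sub (hf.mono_measure (posPart_le_tv μ)) (hg.mono_measure (posPart_le_tv μ)),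
    integral_sub (hf.mono_measure (negPart_le_tv μ)) (hg.mono_measure (negPart_le_tv μ))]
  ring

lemma abs_sInt_le {μ : SignedMeasure (E d)} {f : E d → ℝ}
    (hf : Integrable f μ.totalVariation) :
    |sInt μ f| ≤ ∫ x, |f x| ∂μ.totalVariation := by
  have hp := hf.mono_measure (posPart_le_tv μ)
  have hn := hf.mono_measure (negPart_le_tv μ)
  unfold sInt
  calc |∫ x, f x ∂μ.toJordanDecomposition.posPart - ∫ x, f x ∂μ.toJordanDecomposition.negPart|
      ≤ |∫ x, f x ∂μ.toJordanDecomposition.posPart| +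
        |∫ x, f x ∂μ.toJordanDecomposition.negPart| := abs_sub _ _
    _ ≤ (∫ x, |f x| ∂μ.toJordanDecomposition.posPart) +
        ∫ x, |f x| ∂μ.toJordanDecomposition.negPart := by
        refine add_le_add ?_ ?_ <;>
          simpa [Real.norm_eq_abs] using norm_integral_le_integral_norm (μ := _) f
    _ = ∫ x, |f x| ∂μ.totalVariation := by
        rw [SignedMeasure.totalVariation, integral_add_measure hp.abs hn.abs]

lemma ae_eq_tv_of_eqOn {G : Type*} {μ : SignedMeasure (E d)} {K : Set (E d)}
    (hK0 : μ.totalVariation Kᶜ = 0) {f g : E d → G}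
    (h : ∀ x ∈ K, f x = g x) : f =ᵐ[μ.totalVariation] g := by
  refine Filter.eventuallyEq_of_mem (MeasureTheory.mem_ae_iff.2 ?_) (fun x hx => hx)
  refine measure_mono_null ?_ hK0
  intro x hx
  simp only [Set.mem_compl_iff, Set.mem_setOf_eq] at hx ⊢
  exact fun hxK => hx (h x hxK)

lemma integrable_tv_of_continuous {μ : SignedMeasure (E d)} {K : Set (E d)}
    (hKc : IsCompact K) (hK0 : μ.totalVariation Kᶜ = 0) {f : E d → ℝ}
    (hf : Continuous f) : Integrable f μ.totalVariation := by
  obtain ⟨C, hC⟩ := hKc.exists_bound_of_continuousOn hf.continuousOn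
  have hae : f =ᵐ[μ.totalVariation] K.indicator f := by
    refine ae_eq_tv_of_eqOn hK0 (fun x hx => ?_)
    simp [Set.indicator_of_mem hx]
  rw [integrable_congr hae]
  have : IsFiniteMeasure μ.totalVariation := by
    rw [SignedMeasure.totalVariation]; infer_instance
  refine Integrable.mono' (integrable_const (max C 0))
    ((hf.stronglyMeasurable.indicator hKc.measurableSet).aestronglyMeasurable)
    (Filter.Eventually.of_forall fun x => ?_)
  by_cases hx : x ∈ K
  · simp only [Set.indicator_of_mem hx, Real.norm_eq_abs]
    exact le_max_of_le_left (by simpa [Real.norm_eq_abs] using hC x hx)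
  · simp [Set.indicator_of_notMem hx]

lemma evalC_mul (P Q : MvPolynomial (Fin d) ℂ) (x : E d) :
    evalC (P * Q) x = evalC P x * evalC Q x := by simp [evalC]

lemma norm_sq_eq_sum (x : E d) : ‖x‖ ^ 2 = ∑ i, x i ^ 2 := by
  rw [EuclideanSpace.norm_eq, Real.sq_sqrt (Finset.sum_nonneg fun i _ => sq_nonneg _)]
  simp [sq_abs]

lemma evalC_normSqP (x : E d) : evalC (normSqP d) x = ((‖x‖ ^ 2 : ℝ) : ℂ) := by
  simp only [evalC, normSqP, map_sum, map_pow, eval_X, norm_sq_eq_sum]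
  push_cast
  rfl

lemma evalC_YC (B : HarmonicBasis d) (k : ℕ) (l : Fin (B.a k)) (x : E d) :
    evalC (B.YC k l) x = ((B.Yf k l x : ℝ) : ℂ) := by
  unfold evalC HarmonicBasis.YC HarmonicBasis.Yf
  rw [MvPolynomial.eval_map]
  have h := MvPolynomial.eval₂_comp_left (algebraMap ℝ ℂ) (RingHom.id ℝ)
    (fun i => x i) (B.Y k l)
  simp only [RingHom.comp_id, Complex.coe_algebraMap, Function.comp_def] at h
  rw [← h]
  rfl

lemma evalC_aeval_normSqP (q : Polynomial ℂ) (x : E d) :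
    evalC (Polynomial.aeval (normSqP d) q) x = q.eval ((‖x‖ ^ 2 : ℝ) : ℂ) := by
  unfold evalC
  rw [Polynomial.aeval_def,
    show (algebraMap ℂ (MvPolynomial (Fin d) ℂ)) = MvPolynomial.C from rfl,
    Polynomial.hom_eval₂]
  have h1 : (MvPolynomial.eval (fun i => ((x i : ℝ) : ℂ))).comp MvPolynomial.C
      = RingHom.id ℂ := by
    ext z; simp
  have h2 : MvPolynomial.eval (fun i => ((x i : ℝ) : ℂ)) (normSqP d)
      = ((‖x‖ ^ 2 : ℝ) : ℂ) := evalC_normSqP x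
  rw [h1, h2]
  rfl

lemma map_conj_eval (p : Polynomial ℂ) (s : ℝ) :
    (p.map (starRingEnd ℂ)).eval ((s : ℝ) : ℂ) = (starRingEnd ℂ) (p.eval ((s : ℝ) : ℂ)) := by
  rw [Polynomial.eval_map,
    show p.eval ((s : ℝ) : ℂ) = p.eval₂ (RingHom.id ℂ) ((s : ℝ) : ℂ) from rfl,
    Polynomial.hom_eval₂]
  simp [Complex.conj_ofReal]

lemma eval_conj_mul_self (p : Polynomial ℂ) (s : ℝ) :
    (p.map (starRingEnd ℂ) * p).eval ((s : ℝ) : ℂ)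
      = ((Complex.normSq (p.eval ((s : ℝ) : ℂ)) : ℝ) : ℂ) := by
  rw [Polynomial.eval_mul, map_conj_eval, Complex.normSq_eq_conj_mul_self]

lemma component_sInt (B : HarmonicBasis d) (μ : SignedMeasure (E d)) (k : ℕ)
    (l : Fin (B.a k)) (q : Polynomial ℂ) :
    B.component (fun P => sInt μ (evalC P)) k l q =
      sInt μ (fun x => q.eval ((‖x‖ ^ 2 : ℝ) : ℂ) * ((B.Yf k l x : ℝ) : ℂ)) := by
  unfold HarmonicBasis.component
  exact congrArg (sInt μ) (funext fun x => by
    rw [show evalC (Polynomial.aeval (normSqP d) q * B.YC k l) x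
        = evalC (Polynomial.aeval (normSqP d) q) x * evalC (B.YC k l) x from
      evalC_mul _ _ x, evalC_aeval_normSqP, evalC_YC])

lemma continuous_Yf (B : HarmonicBasis d) (k : ℕ) (l : Fin (B.a k)) :
    Continuous (B.Yf k l) :=
  (MvPolynomial.continuous_eval _).comp (PiLp.continuous_ofLp _ _)

end Helpers

theorem statement7 {d : ℕ} (hd : 1 ≤ d) (B : HarmonicBasis d) (μ : SignedMeasure (E d))
    (hcs : ∃ K : Set (E d), IsCompact K ∧ μ.totalVariation Kᶜ = 0) :
    B.PseudoPositive μ ↔ B.PPD (fun P => sInt μ (evalC P)) := by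
  obtain ⟨K, hKc, hK0⟩ := hcs
  obtain ⟨R, hRK⟩ := hKc.isBounded.subset_closedBall 0
  set R0 : ℝ := max R 0 with hR0def
  have hR0 : 0 ≤ R0 := le_max_right _ _
  have hRK' : K ⊆ closedBall 0 R0 :=
    hRK.trans (closedBall_subset_closedBall (le_max_left _ _))
  have hnormK : ∀ x ∈ K, ‖x‖ ≤ R0 := fun x hx =>
    mem_closedBall_zero_iff.1 (hRK' hx)
  have hInt : ∀ f : E d → ℝ, Continuous f → Integrable f μ.totalVariation :=
    fun f hf => integrable_tv_of_continuous hKc hK0 hf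
  constructor
  · -- pseudo-positive → pseudo-positive definite
    intro hpp k l p
    have hYc : Continuous (B.Yf k l) := continuous_Yf B k l
    -- cutoff function
    set χ : ℝ → ℝ := fun t => max 0 (min 1 (R0 + 1 - |t|)) with hχdef
    have hχcont : Continuous χ :=
      continuous_const.max (continuous_const.min (continuous_const.sub continuous_abs))
    have hχnn : ∀ t, 0 ≤ χ t := fun t => le_max_left _ _
    have hχ1 : ∀ t : ℝ, |t| ≤ R0 → χ t = 1 := by
      intro t ht
      have h1 : (1 : ℝ) ≤ R0 + 1 - |t| := by linarith
      simp only [hχdef, min_eq_left h1]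
      exact max_eq_right zero_le_one
    have hχ0 : ∀ t : ℝ, R0 + 1 ≤ |t| → χ t = 0 := by
      intro t ht
      have h1 : min 1 (R0 + 1 - |t|) ≤ 0 := (min_le_right _ _).trans (by linarith)
      simp only [hχdef]
      exact max_eq_left h1
    have key : ∀ F : ℝ → ℝ, Continuous F → (∀ t : ℝ, 0 ≤ F (t ^ 2)) →
        0 ≤ sInt μ (fun x => F (‖x‖ ^ 2) * B.Yf k l x) := by
      intro F hFc hFnn
      set h : ℝ → ℝ := fun t => χ t * F (t ^ 2) with hhdef
      have hhc : Continuous h := hχcont.mul (hFc.comp (continuous_pow 2))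
      have hhsupp : HasCompactSupport h := by
        refine HasCompactSupport.intro (isCompact_Icc (a := -(R0 + 1)) (b := R0 + 1))
          (fun t ht => ?_)
        have habs : R0 + 1 ≤ |t| := by
          rcases abs_cases t with ⟨h1, _⟩ | ⟨h1, _⟩ <;>
            simp only [Set.mem_Icc, not_and_or, not_le] at ht <;> rcases ht with ht | ht <;>
              linarith
        simp only [hhdef, hχ0 t habs, zero_mul]
      have hhnn : ∀ t, 0 ≤ h t := fun t => mul_nonneg (hχnn t) (hFnn t)
      have h1 := hpp k l h hhc hhsupp hhnn
      have h2 : (fun x => h ‖x‖ * B.Yf k l x) =ᵐ[μ.totalVariation]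
          (fun x => F (‖x‖ ^ 2) * B.Yf k l x) := by
        refine ae_eq_tv_of_eqOn hK0 (fun x hx => ?_)
        have := hnormK x hx
        simp only [hhdef]
        rw [hχ1 ‖x‖ (by rwa [abs_of_nonneg (norm_nonneg x)]), one_mul]
      rw [sInt_congr h2] at h1
      exact h1
    constructor
    · rw [component_sInt]
      have heq : (fun x => (p.map (starRingEnd ℂ) * p).eval ((‖x‖ ^ 2 : ℝ) : ℂ) *
            ((B.Yf k l x : ℝ) : ℂ)) =
          fun x => (((Complex.normSq (p.eval ((‖x‖ ^ 2 : ℝ) : ℂ)) * B.Yf k l x : ℝ)) : ℂ) := by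
        funext x
        rw [eval_conj_mul_self]
        push_cast
        ring
      rw [heq, sInt_ofReal]
      refine Complex.zero_le_real.2 ?_
      exact key (fun s => Complex.normSq (p.eval ((s : ℝ) : ℂ)))
        (Complex.continuous_normSq.comp (p.continuous.comp Complex.continuous_ofReal))
        (fun t => Complex.normSq_nonneg _)
    · rw [component_sInt]
      have heq : (fun x => (Polynomial.X * (p.map (starRingEnd ℂ) * p)).eval
            ((‖x‖ ^ 2 : ℝ) : ℂ) * ((B.Yf k l x : ℝ) : ℂ)) =
          fun x => ((((‖x‖ ^ 2) * Complex.normSq (p.eval ((‖x‖ ^ 2 : ℝ) : ℂ)) *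
            B.Yf k l x : ℝ)) : ℂ) := by
        funext x
        rw [Polynomial.eval_mul, Polynomial.eval_X, eval_conj_mul_self]
        push_cast
        ring
      rw [heq, sInt_ofReal]
      refine Complex.zero_le_real.2 ?_
      exact key (fun s => s * Complex.normSq (p.eval ((s : ℝ) : ℂ)))
        (continuous_id.mul
          (Complex.continuous_normSq.comp (p.continuous.comp Complex.continuous_ofReal)))
        (fun t => mul_nonneg (sq_nonneg t) (Complex.normSq_nonneg _))
  · -- pseudo-positive definite → pseudo-positive
    intro hppd k l h hcont hhsupp hh0
    have hYc : Continuous (B.Yf k l) := continuous_Yf B k l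
    have hYint : Integrable (fun x => |B.Yf k l x|) μ.totalVariation := hInt _ hYc.abs
    set C0 : ℝ := ∫ x, |B.Yf k l x| ∂μ.totalVariation with hC0def
    have hC0nn : 0 ≤ C0 := integral_nonneg (fun x => abs_nonneg _)
    obtain ⟨M, hMnn, hM⟩ : ∃ M : ℝ, 0 ≤ M ∧ ∀ t, |h t| ≤ M := by
      obtain ⟨C, hC⟩ := hhsupp.exists_bound_of_continuousOn hcont.continuousOn
      refine ⟨max C 0, le_max_right _ _, fun t => ?_⟩
      by_cases ht : t ∈ tsupport h
      · exact le_max_of_le_left (by simpa [Real.norm_eq_abs] using hC t ht)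
      · simp [image_eq_zero_of_notMem_tsupport ht]
    have hint1 : Integrable (fun x => h ‖x‖ * B.Yf k l x) μ.totalVariation :=
      hInt _ ((hcont.comp continuous_norm).mul hYc)
    have main : ∀ ε : ℝ, 0 < ε →
        -(2 * ε * C0) ≤ sInt μ (fun x => h ‖x‖ * B.Yf k l x) := by
      intro ε hε
      set H : ℝ → ℝ := fun s => h (Real.sqrt s) with hHdef
      have hHcont : Continuous H := hcont.comp Real.continuous_sqrt
      have hHnn : ∀ s, 0 ≤ H s := fun s => hh0 _
      have hHle : ∀ s, H s ≤ M := fun s => (le_abs_self _).trans (hM _)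
      set Cb : ℝ := Real.sqrt (M + ε) with hCbdef
      have hCbnn : 0 ≤ Cb := Real.sqrt_nonneg _
      set F : ℝ → ℝ := fun s => Real.sqrt (H s + ε) with hFdef
      have hFc : Continuous F := Real.continuous_sqrt.comp (hHcont.add continuous_const)
      have hFnn : ∀ s, 0 ≤ F s := fun s => Real.sqrt_nonneg _
      have hFle : ∀ s, F s ≤ Cb := fun s => Real.sqrt_le_sqrt (by linarith [hHle s])
      set δ : ℝ := min 1 (ε / (1 + 2 * Cb)) with hδdef
      have hδpos : 0 < δ := lt_min one_pos (div_pos hε (by linarith))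
      have hδ1 : δ ≤ 1 := min_le_left _ _
      have hδ2 : δ * (1 + 2 * Cb) ≤ ε := by
        have := min_le_right 1 (ε / (1 + 2 * Cb))
        calc δ * (1 + 2 * Cb) ≤ (ε / (1 + 2 * Cb)) * (1 + 2 * Cb) := by
              exact mul_le_mul_of_nonneg_right this (by linarith)
          _ = ε := div_mul_cancel₀ _ (by linarith)
      obtain ⟨r, hr⟩ := exists_polynomial_near_of_continuousOn 0 (R0 ^ 2) F
        hFc.continuousOn δ hδpos
      have hest : ∀ s ∈ Set.Icc (0 : ℝ) (R0 ^ 2), |(r.eval s) ^ 2 - H s| ≤ 2 * ε := by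
        intro s hs
        have h1 : |r.eval s - F s| < δ := hr s hs
        have h2 : (F s) ^ 2 = H s + ε := Real.sq_sqrt (by linarith [hHnn s])
        have h3 : |r.eval s + F s| ≤ δ + 2 * Cb := by
          have hb : |r.eval s + F s| = |(r.eval s - F s) + 2 * F s| := by ring_nf
          rw [hb]
          refine (abs_add_le _ _).trans ?_
          have : |2 * F s| = 2 * F s := abs_of_nonneg (by linarith [hFnn s])
          rw [this]
          have := hFle s
          linarith [h1.le]
        have h4 : (r.eval s) ^ 2 - H s = (r.eval s - F s) * (r.eval s + F s) + ε := by
          have : (r.eval s - F s) * (r.eval s + F s) = (r.eval s) ^ 2 - (F s) ^ 2 := by ring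
          rw [this, h2]; ring
        rw [h4]
        calc |(r.eval s - F s) * (r.eval s + F s) + ε|
            ≤ |(r.eval s - F s) * (r.eval s + F s)| + |ε| := abs_add_le _ _
          _ = |r.eval s - F s| * |r.eval s + F s| + ε := by
              rw [abs_mul, abs_of_pos hε]
          _ ≤ δ * (δ + 2 * Cb) + ε := by
              refine add_le_add_left ?_ ε
              exact mul_le_mul h1.le h3 (abs_nonneg _) hδpos.le
          _ ≤ δ * (1 + 2 * Cb) + ε := by nlinarith
          _ ≤ 2 * ε := by linarith
      -- positivity from PPD applied to the real polynomial r
      set q : Polynomial ℂ := r.map (algebraMap ℝ ℂ) with hqdef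
      have hq1 : q.map (starRingEnd ℂ) = q := by
        rw [hqdef, Polynomial.map_map]
        congr 1
        ext z
        simp [Complex.conj_ofReal]
      have hqq := (hppd k l q).1
      rw [hq1] at hqq
      rw [component_sInt] at hqq
      have hqev : ∀ s : ℝ, (q * q).eval ((s : ℝ) : ℂ) = (((r.eval s) ^ 2 : ℝ) : ℂ) := by
        intro s
        have hq2 : q.eval ((s : ℝ) : ℂ) = ((r.eval s : ℝ) : ℂ) := by
          rw [hqdef, Polynomial.eval_map,
            show ((s : ℝ) : ℂ) = algebraMap ℝ ℂ s from rfl, Polynomial.eval₂_at_apply]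
          rfl
        rw [Polynomial.eval_mul, hq2]
        push_cast
        ring
      have heq2 : (fun x => (q * q).eval ((‖x‖ ^ 2 : ℝ) : ℂ) * ((B.Yf k l x : ℝ) : ℂ)) =
          fun x => ((((r.eval (‖x‖ ^ 2)) ^ 2 * B.Yf k l x : ℝ)) : ℂ) := by
        funext x
        rw [hqev]
        push_cast
        ring
      rw [heq2, sInt_ofReal] at hqq
      have hA : 0 ≤ sInt μ (fun x => (r.eval (‖x‖ ^ 2)) ^ 2 * B.Yf k l x) :=
        Complex.zero_le_real.1 hqq
      have hint2 : Integrable (fun x => (r.eval (‖x‖ ^ 2)) ^ 2 * B.Yf k l x)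
          μ.totalVariation :=
        hInt _ (((r.continuous.comp (continuous_norm.pow 2)).pow 2).mul hYc)
      have hsub : sInt μ (fun x => h ‖x‖ * B.Yf k l x -
            (r.eval (‖x‖ ^ 2)) ^ 2 * B.Yf k l x) =
          sInt μ (fun x => h ‖x‖ * B.Yf k l x) -
            sInt μ (fun x => (r.eval (‖x‖ ^ 2)) ^ 2 * B.Yf k l x) :=
        sInt_sub hint1 hint2
      have hbound : |sInt μ (fun x => h ‖x‖ * B.Yf k l x -
            (r.eval (‖x‖ ^ 2)) ^ 2 * B.Yf k l x)| ≤ 2 * ε * C0 := by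
        refine (abs_sInt_le (hint1.sub hint2)).trans ?_
        have hae : (fun x => |h ‖x‖ * B.Yf k l x - (r.eval (‖x‖ ^ 2)) ^ 2 * B.Yf k l x|)
            ≤ᵐ[μ.totalVariation] fun x => 2 * ε * |B.Yf k l x| := by
          rw [Filter.EventuallyLE, ae_iff]
          refine measure_mono_null (fun x hx => ?_) hK0
          simp only [Set.mem_setOf_eq, not_le] at hx
          intro hxK
          have hn := hnormK x hxK
          have hmem : ‖x‖ ^ 2 ∈ Set.Icc (0 : ℝ) (R0 ^ 2) :=
            ⟨sq_nonneg _, pow_le_pow_left₀ (norm_nonneg x) hn 2⟩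
          have hhH : h ‖x‖ = H (‖x‖ ^ 2) := by
            simp only [hHdef]
            rw [Real.sqrt_sq (norm_nonneg x)]
          have : |h ‖x‖ * B.Yf k l x - (r.eval (‖x‖ ^ 2)) ^ 2 * B.Yf k l x|
              ≤ 2 * ε * |B.Yf k l x| := by
            have hfac : h ‖x‖ * B.Yf k l x - (r.eval (‖x‖ ^ 2)) ^ 2 * B.Yf k l x =
                -(((r.eval (‖x‖ ^ 2)) ^ 2 - H (‖x‖ ^ 2)) * B.Yf k l x) := by
              rw [hhH]; ring
            rw [hfac, abs_neg, abs_mul]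
            exact mul_le_mul_of_nonneg_right (hest _ hmem) (abs_nonneg _)
          exact absurd this (not_le.2 hx)
        refine (integral_mono_ae (hint1.sub hint2).abs (hYint.const_mul (2 * ε)) hae).trans ?_
        rw [integral_const_mul]
      linarith [neg_abs_le (sInt μ (fun x => h ‖x‖ * B.Yf k l x -
        (r.eval (‖x‖ ^ 2)) ^ 2 * B.Yf k l x)), hsub, hA, hbound]
    by_contra hcon
    push_neg at hcon
    set A : ℝ := sInt μ (fun x => h ‖x‖ * B.Yf k l x) with hAdef
    have hεpos : 0 < (-A) / (2 * C0 + 1) := div_pos (neg_pos.2 hcon) (by linarith)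
    have h1 := main ((-A) / (2 * C0 + 1)) hεpos
    have h2 : ((-A) / (2 * C0 + 1)) * (2 * C0 + 1) = -A :=
      div_mul_cancel₀ _ (by linarith)
    nlinarith [hεpos, h1, h2, hC0nn]
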